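/- For all 2×2 complex matrices A and B and all θ ∈ (0,π), φ ∈ ℝ, the sine bracket equals a scaled Poisson bracket on the sphere: Q_{−i(AB−BA)}(θ,φ) = (4π/sinθ)·( ∂Q_A/∂θ · ∂Q_B/∂φ − ∂Q_A/∂φ · ∂Q_B/∂θ ). -/

import Mathlib

open Matrix Complex Real MeasureTheory

noncomputable section

/-- The spin coherent state |θ,φ⟩ = cos(θ/2)|0⟩ + e^{iφ} sin(θ/2)|1⟩. -/
def cohVec (θ φ : ℝ) : Fin 2 → ℂ :=
  ![((Real.cos (θ / 2) : ℝ) : ℂ),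
    Complex.exp (Complex.I * (φ : ℂ)) * ((Real.sin (θ / 2) : ℝ) : ℂ)]

/-- The Husimi Q function of a 2×2 complex matrix. -/
def Qfun (A : Matrix (Fin 2) (Fin 2) ℂ) (θ φ : ℝ) : ℂ :=
  (1 / (2 * Real.pi) : ℂ) *
    ∑ k, ∑ l, (starRingEnd ℂ) (cohVec θ φ k) * A k l * cohVec θ φ l

/-- ∂Q_A/∂θ. -/
def Qθ (A : Matrix (Fin 2) (Fin 2) ℂ) (θ φ : ℝ) : ℂ :=
  deriv (fun t => Qfun A t φ) θ

/-- ∂Q_A/∂φ. -/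
def Qφ (A : Matrix (Fin 2) (Fin 2) ℂ) (θ φ : ℝ) : ℂ :=
  deriv (fun p => Qfun A θ p) φ

lemma Qfun_eq (A : Matrix (Fin 2) (Fin 2) ℂ) (θ φ : ℝ) :
    Qfun A θ φ = (1 / (2 * Real.pi) : ℂ) *
      (((Real.cos (θ/2) : ℝ) : ℂ) * ((Real.cos (θ/2) : ℝ) : ℂ) * A 0 0
        + ((Real.cos (θ/2) : ℝ) : ℂ) * ((Real.sin (θ/2) : ℝ) : ℂ) *
            (Complex.exp (Complex.I * φ) * A 0 1 + Complex.exp (-(Complex.I * φ)) * A 1 0)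
        + ((Real.sin (θ/2) : ℝ) : ℂ) * ((Real.sin (θ/2) : ℝ) : ℂ) * A 1 1) := by
  have hconj : (starRingEnd ℂ) (Complex.exp (Complex.I * φ)) = Complex.exp (-(Complex.I * φ)) := by
    rw [← Complex.exp_conj]
    congr 1
    simp [Complex.conj_ofReal]
  have h : Complex.exp (-(Complex.I * φ)) * Complex.exp (Complex.I * φ) = 1 := by
    rw [← Complex.exp_add]; simp
  simp only [Qfun, cohVec, Fin.sum_univ_two, Matrix.cons_val_zero, Matrix.cons_val_one,
    Matrix.head_cons, RingHom.map_mul, hconj, Complex.conj_ofReal]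
  linear_combination (1/(2*Real.pi) : ℂ) * (Real.sin (θ/2) : ℂ) * (Real.sin (θ/2) : ℂ) * A 1 1 * h

lemma Qθ_eq (A : Matrix (Fin 2) (Fin 2) ℂ) (θ φ : ℝ) :
    Qθ A θ φ = (1 / (2 * Real.pi) : ℂ) *
      (-(((Real.cos (θ/2) : ℝ) : ℂ) * ((Real.sin (θ/2) : ℝ) : ℂ)) * A 0 0
        + ((((Real.cos (θ/2) : ℝ) : ℂ)^2 - ((Real.sin (θ/2) : ℝ) : ℂ)^2)/2) *
            (Complex.exp (Complex.I * φ) * A 0 1 + Complex.exp (-(Complex.I * φ)) * A 1 0)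
        + (((Real.cos (θ/2) : ℝ) : ℂ) * ((Real.sin (θ/2) : ℝ) : ℂ)) * A 1 1) := by
  have hfun : (fun t => Qfun A t φ) = fun t => (1 / (2 * Real.pi) : ℂ) *
      (((Real.cos (t/2) : ℝ) : ℂ) * ((Real.cos (t/2) : ℝ) : ℂ) * A 0 0
        + ((Real.cos (t/2) : ℝ) : ℂ) * ((Real.sin (t/2) : ℝ) : ℂ) *
            (Complex.exp (Complex.I * φ) * A 0 1 + Complex.exp (-(Complex.I * φ)) * A 1 0)
        + ((Real.sin (t/2) : ℝ) : ℂ) * ((Real.sin (t/2) : ℝ) : ℂ) * A 1 1) :=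
    funext fun t => Qfun_eq A t φ
  have hg : HasDerivAt (fun t : ℝ => t / 2) (1 / 2) θ := (hasDerivAt_id θ).div_const 2
  have hc : HasDerivAt (fun t : ℝ => ((Real.cos (t/2) : ℝ) : ℂ))
      ((-Real.sin (θ/2) * (1/2) : ℝ) : ℂ) θ :=
    by have h := HasDerivAt.comp θ (Real.hasDerivAt_cos (θ/2)) hg; exact h.ofReal_comp
  have hs : HasDerivAt (fun t : ℝ => ((Real.sin (t/2) : ℝ) : ℂ))
      ((Real.cos (θ/2) * (1/2) : ℝ) : ℂ) θ :=
    by have h := HasDerivAt.comp θ (Real.hasDerivAt_sin (θ/2)) hg; exact h.ofReal_comp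
  have key := ((((hc.mul hc).mul_const (A 0 0)).add ((hc.mul hs).mul_const
      (Complex.exp (Complex.I * φ) * A 0 1 + Complex.exp (-(Complex.I * φ)) * A 1 0))).add
      ((hs.mul hs).mul_const (A 1 1))).const_mul (1 / (2 * Real.pi) : ℂ)
  rw [Qθ, hfun]
  refine key.deriv.trans ?_
  push_cast
  ring

lemma Qφ_eq (A : Matrix (Fin 2) (Fin 2) ℂ) (θ φ : ℝ) :
    Qφ A θ φ = (1 / (2 * Real.pi) : ℂ) *
      (((Real.cos (θ/2) : ℝ) : ℂ) * ((Real.sin (θ/2) : ℝ) : ℂ) * Complex.I *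
        (Complex.exp (Complex.I * φ) * A 0 1 - Complex.exp (-(Complex.I * φ)) * A 1 0)) := by
  have hfun : (fun p => Qfun A θ p) = fun p : ℝ => (1 / (2 * Real.pi) : ℂ) *
      (((Real.cos (θ/2) : ℝ) : ℂ) * ((Real.cos (θ/2) : ℝ) : ℂ) * A 0 0
        + ((Real.cos (θ/2) : ℝ) : ℂ) * ((Real.sin (θ/2) : ℝ) : ℂ) *
            (Complex.exp (Complex.I * (p : ℂ)) * A 0 1
              + Complex.exp (-(Complex.I * (p : ℂ))) * A 1 0)
        + ((Real.sin (θ/2) : ℝ) : ℂ) * ((Real.sin (θ/2) : ℝ) : ℂ) * A 1 1) :=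
    funext fun p => Qfun_eq A θ p
  have hI : HasDerivAt (fun p : ℝ => Complex.I * (p : ℂ)) (Complex.I * 1) φ :=
    (hasDerivAt_id φ).ofReal_comp.const_mul Complex.I
  have hE : HasDerivAt (fun p : ℝ => Complex.exp (Complex.I * (p : ℂ)))
      (Complex.exp (Complex.I * (φ : ℂ)) * (Complex.I * 1)) φ := hI.cexp
  have hEn : HasDerivAt (fun p : ℝ => Complex.exp (-(Complex.I * (p : ℂ))))
      (Complex.exp (-(Complex.I * (φ : ℂ))) * (-(Complex.I * 1))) φ := hI.neg.cexp
  have k1 : HasDerivAt (fun p : ℝ => Complex.exp (Complex.I * (p : ℂ)) * A 0 1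
      + Complex.exp (-(Complex.I * (p : ℂ))) * A 1 0)
      (Complex.exp (Complex.I * (φ : ℂ)) * (Complex.I * 1) * A 0 1
        + Complex.exp (-(Complex.I * (φ : ℂ))) * (-(Complex.I * 1)) * A 1 0) φ :=
    (hE.mul_const (A 0 1)).add (hEn.mul_const (A 1 0))
  have k2 := k1.const_mul (((Real.cos (θ/2) : ℝ) : ℂ) * ((Real.sin (θ/2) : ℝ) : ℂ))
  have k3 := ((hasDerivAt_const φ
      (((Real.cos (θ/2) : ℝ) : ℂ) * ((Real.cos (θ/2) : ℝ) : ℂ) * A 0 0)).add k2).add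
      (hasDerivAt_const φ (((Real.sin (θ/2) : ℝ) : ℂ) * ((Real.sin (θ/2) : ℝ) : ℂ) * A 1 1))
  have key := k3.const_mul (1 / (2 * Real.pi) : ℂ)
  rw [Qφ, hfun]
  refine key.deriv.trans ?_
  ring

/-- the sine bracket equals a scaled Poisson bracket on the sphere. -/
theorem sine_bracket_is_poisson_bracket (A B : Matrix (Fin 2) (Fin 2) ℂ)
    (θ φ : ℝ) (hθ : θ ∈ Set.Ioo (0 : ℝ) Real.pi) :
    Qfun ((-Complex.I) • (A * B - B * A)) θ φ =
      ((4 * Real.pi / Real.sin θ : ℝ) : ℂ) *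
        (Qθ A θ φ * Qφ B θ φ - Qφ A θ φ * Qθ B θ φ) := by
  obtain ⟨h0, h1⟩ := hθ
  have hs : 0 < Real.sin (θ/2) :=
    Real.sin_pos_of_pos_of_lt_pi (by linarith) (by linarith [Real.pi_pos])
  have hc : 0 < Real.cos (θ/2) :=
    Real.cos_pos_of_mem_Ioo ⟨by linarith [Real.pi_pos], by linarith⟩
  have hsin : Real.sin θ = 2 * Real.sin (θ/2) * Real.cos (θ/2) := by
    have h := Real.sin_two_mul (θ/2)
    rw [mul_div_cancel₀ θ two_ne_zero] at h
    exact h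
  have hpi : (Real.pi : ℂ) ≠ 0 := Complex.ofReal_ne_zero.mpr Real.pi_ne_zero
  have hsC : ((Real.sin (θ/2) : ℝ) : ℂ) ≠ 0 := Complex.ofReal_ne_zero.mpr (ne_of_gt hs)
  have hcC : ((Real.cos (θ/2) : ℝ) : ℂ) ≠ 0 := Complex.ofReal_ne_zero.mpr (ne_of_gt hc)
  have hcast : ((4 * Real.pi / Real.sin θ : ℝ) : ℂ)
      = 4 * (Real.pi : ℂ) /
        (2 * ((Real.sin (θ/2) : ℝ) : ℂ) * ((Real.cos (θ/2) : ℝ) : ℂ)) := by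
    rw [hsin, Complex.ofReal_div, Complex.ofReal_mul, Complex.ofReal_mul,
      Complex.ofReal_mul, Complex.ofReal_ofNat, Complex.ofReal_ofNat]
  rw [Qfun_eq, Qθ_eq, Qθ_eq, Qφ_eq, Qφ_eq, hcast]
  simp only [Matrix.smul_apply, Matrix.sub_apply, Matrix.mul_apply, Fin.sum_univ_two,
    smul_eq_mul]
  set c := ((Real.cos (θ/2) : ℝ) : ℂ) with hcdef
  set s := ((Real.sin (θ/2) : ℝ) : ℂ) with hsdef
  set e := Complex.exp (Complex.I * (φ : ℂ)) with hedef
  set f := Complex.exp (-(Complex.I * (φ : ℂ))) with hfdef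
  set p := ((Real.pi : ℝ) : ℂ) with hpdef
  have hef : e * f = 1 := by
    rw [hedef, hfdef, ← Complex.exp_add]; simp
  have hss : s * s⁻¹ = 1 := mul_inv_cancel₀ hsC
  have hcc : c * c⁻¹ = 1 := mul_inv_cancel₀ hcC
  have hpp : p * p⁻¹ = 1 := mul_inv_cancel₀ hpi
  set A00 := A 0 0; set A01 := A 0 1; set A10 := A 1 0; set A11 := A 1 1
  set B00 := B 0 0; set B01 := B 0 1; set B10 := B 1 0; set B11 := B 1 1
  linear_combination
    ((1/2)*Complex.I*p*p⁻¹^2*(c^2*c⁻¹*e*s*(A00*B01 - A01*B00 + A01*B11 - A11*B01)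
      + c^2*c⁻¹*f*s*(-(A00*B10) + A10*B00 - A10*B11 + A11*B10)
      + (c^3*c⁻¹ - c*c⁻¹*s^2)*e*f*(A01*B10 - A10*B01))) * hss
    + ((1/2)*Complex.I*p*p⁻¹^2*(c*e*s*(A00*B01 - A01*B00 + A01*B11 - A11*B01)
      + c*f*s*(-(A00*B10) + A10*B00 - A10*B11 + A11*B10)
      + (c^2 - s^2)*e*f*(A01*B10 - A10*B01))) * hcc
    + ((1/2)*Complex.I*p⁻¹*(c*e*s*(A00*B01 - A01*B00 + A01*B11 - A11*B01)
      + c*f*s*(-(A00*B10) + A10*B00 - A10*B11 + A11*B10)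
      + (c^2 - s^2)*e*f*(A01*B10 - A10*B01))) * hpp
    + ((1/2)*Complex.I*p⁻¹*(c^2 - s^2)*(A01*B10 - A10*B01)) * hef
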